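/- For 0 ≤ x < 1 and 0 ≤ y < 1, the double series F₁(x,y) = Σ_{m,n≥0} (1/2)_{m+n}(1/2)_m(1/2)_n / ((1)_{m+n} m! n!) x^m y^n converges absolutely, and equals (1/π)∫₀¹ du/√(u(1−u)(1−xu)(1−yu)). -/

import Mathlib

open intervalIntegral Real

open Set MeasureTheory

noncomputable def cc (m : ℕ) : ℝ := (ascPochhammer ℝ m).eval (1/2) / m.factorial

lemma poch_half_pos (m : ℕ) : 0 < (ascPochhammer ℝ m).eval (1/2 : ℝ) :=
  ascPochhammer_pos m _ (by norm_num)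

lemma cc_pos (m : ℕ) : 0 < cc m :=
  div_pos (poch_half_pos m) (by exact_mod_cast m.factorial_pos)

lemma cc_zero : cc 0 = 1 := by simp [cc]

lemma cc_succ (m : ℕ) : cc (m + 1) = cc m * ((1/2 + m) / (m + 1)) := by
  have h : (ascPochhammer ℝ (m+1)).eval (1/2 : ℝ)
      = (ascPochhammer ℝ m).eval (1/2 : ℝ) * (1/2 + m) := by
    rw [ascPochhammer_succ_right]
    simp [Polynomial.eval_mul]
  rw [cc, cc, h, Nat.factorial_succ]
  push_cast
  rw [div_mul_div_comm]
  ring_nf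

lemma cc_le_one (m : ℕ) : cc m ≤ 1 := by
  induction m with
  | zero => simp [cc_zero]
  | succ n ih =>
    rw [cc_succ]
    have h1 : (1/2 + (n:ℝ)) / (n + 1) ≤ 1 := by
      rw [div_le_one (by positivity)]; linarith
    calc cc n * ((1/2 + (n:ℝ)) / (n + 1)) ≤ 1 * 1 :=
      mul_le_mul ih h1 (by positivity) zero_le_one
    _ = 1 := one_mul 1

lemma succ_mul_cc (m : ℕ) : (m + 1 : ℝ) * cc (m + 1) = (1/2 + m) * cc m := by
  rw [cc_succ]
  field_simp

lemma summable_cc_pow {t : ℝ} (ht : |t| < 1) : Summable (fun m => cc m * t ^ m) := by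
  apply Summable.of_norm
  refine Summable.of_nonneg_of_le (fun m => norm_nonneg _) (fun m => ?_)
    (summable_geometric_of_lt_one (abs_nonneg t) ht)
  rw [norm_mul, norm_pow, Real.norm_eq_abs, Real.norm_eq_abs,
    abs_of_pos (cc_pos m)]
  exact mul_le_of_le_one_left (by positivity) (cc_le_one m)

lemma summable_mul_cc_pow {t : ℝ} (ht : |t| < 1) :
    Summable (fun m : ℕ => (m:ℝ) * cc m * t ^ m) := by
  apply Summable.of_norm
  refine Summable.of_nonneg_of_le (fun m => norm_nonneg _) (fun m => ?_)
    (summable_pow_mul_geometric_of_norm_lt_one (r := |t|) 1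
      (by rw [Real.norm_eq_abs, abs_abs]; exact ht))
  have h3 : (0:ℝ) ≤ |t| ^ m := by positivity
  have h4 : (0:ℝ) ≤ (m:ℝ) := Nat.cast_nonneg m
  rw [norm_mul, norm_mul, norm_pow]
  simp only [Real.norm_eq_abs, abs_of_pos (cc_pos m), abs_of_nonneg h4]
  calc (m:ℝ) * cc m * |t|^m = cc m * ((m:ℝ) * |t|^m) := by ring
  _ ≤ (m:ℝ) * |t|^m := mul_le_of_le_one_left (by positivity) (cc_le_one m)
  _ = (m:ℝ)^1 * |t|^m := by rw [pow_one]

lemma summable_deriv_cc {t : ℝ} (ht : |t| < 1) :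
    Summable (fun m : ℕ => cc m * ((m:ℝ) * t ^ (m - 1))) := by
  rw [← summable_nat_add_iff 1]
  apply Summable.of_norm
  have hs : Summable (fun m : ℕ => ((m:ℝ) + 1) * |t| ^ m) := by
    have := (summable_pow_mul_geometric_of_norm_lt_one 1
        (by rw [Real.norm_eq_abs, abs_abs]; exact ht : ‖|t|‖ < 1)).add
      (summable_geometric_of_lt_one (abs_nonneg t) ht)
    apply this.congr
    intro m; push_cast; ring
  refine Summable.of_nonneg_of_le (fun m => norm_nonneg _) (fun m => ?_) hs
  simp only [Nat.add_sub_cancel, norm_mul, norm_pow, Real.norm_eq_abs,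
    abs_of_pos (cc_pos _)]
  have h3 : (0:ℝ) ≤ |t| ^ m := by positivity
  have h4 : (0:ℝ) ≤ (m:ℝ) := Nat.cast_nonneg m
  simp only [Nat.abs_cast]
  push_cast
  exact mul_le_of_le_one_left (by positivity) (cc_le_one (m+1))

lemma deriv_identity {z : ℝ} (hz : |z| < 1) :
    (1 - z) * (∑' m : ℕ, cc m * ((m:ℝ) * z ^ (m-1)))
      = (1/2) * ∑' m : ℕ, cc m * z ^ m := by
  have hsum := summable_deriv_cc hz
  have hS := summable_cc_pow hz
  have hB := summable_mul_cc_pow hz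
  have step1 : (∑' m : ℕ, cc m * ((m:ℝ) * z ^ (m-1)))
      = (1/2) * (∑' m : ℕ, cc m * z ^ m) + ∑' m : ℕ, (m:ℝ) * cc m * z ^ m := by
    rw [hsum.tsum_eq_zero_add]
    simp only [Nat.cast_zero, zero_mul, mul_zero, zero_add, Nat.add_sub_cancel]
    have congr1 : ∀ m : ℕ, cc (m+1) * (((m:ℕ)+1 : ℝ) * z ^ m)
        = (1/2) * (cc m * z ^ m) + (m:ℝ) * cc m * z ^ m := by
      intro m
      have := succ_mul_cc m
      have h2 : cc (m+1) * (((m:ℕ)+1 : ℝ) * z ^ m) = (((m:ℝ)+1) * cc (m+1)) * z ^ m := by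
        push_cast; ring
      rw [h2, this]; ring
    calc (∑' m : ℕ, cc (m+1) * ((((m+1):ℕ):ℝ) * z ^ m))
        = ∑' m : ℕ, ((1/2) * (cc m * z ^ m) + (m:ℝ) * cc m * z ^ m) := by
          apply tsum_congr; intro m; push_cast; exact congr1 m
      _ = (1/2) * (∑' m : ℕ, cc m * z ^ m) + ∑' m : ℕ, (m:ℝ) * cc m * z ^ m := by
          rw [Summable.tsum_add (hS.mul_left (1/2)) hB, tsum_mul_left]
  have step2 : z * (∑' m : ℕ, cc m * ((m:ℝ) * z ^ (m-1)))
      = ∑' m : ℕ, (m:ℝ) * cc m * z ^ m := by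
    rw [← tsum_mul_left]
    apply tsum_congr; intro m
    cases m with
    | zero => simp
    | succ n => simp only [Nat.add_sub_cancel]; push_cast; ring
  have expand : (1 - z) * (∑' m : ℕ, cc m * ((m:ℝ) * z ^ (m-1)))
      = (∑' m : ℕ, cc m * ((m:ℝ) * z ^ (m-1)))
        - z * (∑' m : ℕ, cc m * ((m:ℝ) * z ^ (m-1))) := by ring
  rw [expand, step2, step1]; ring

lemma tsum_cc_sqrt {t : ℝ} (h0 : 0 ≤ t) (h1 : t < 1) :
    ∑' m : ℕ, cc m * t ^ m = 1 / Real.sqrt (1 - t) := by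
  set r : ℝ := (1 + t)/2 with hr
  have hr1 : r < 1 := by rw [hr]; linarith
  have hrt : t < r := by rw [hr]; linarith
  have hr0 : 0 < r := by rw [hr]; linarith
  have habs : ∀ z : ℝ, z ∈ Set.Ioo (-r) r → |z| < 1 := by
    intro z hz; rw [abs_lt]; constructor <;> [linarith [hz.1]; linarith [hz.2]]
  have key : ∀ z ∈ Set.Ioo (-r) r,
      HasDerivAt (fun w => ∑' m : ℕ, cc m * w ^ m)
        (∑' m : ℕ, cc m * ((m:ℝ) * z ^ (m-1))) z := by
    intro z hz
    refine hasDerivAt_tsum_of_isPreconnected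
      (u := fun m : ℕ => cc m * ((m:ℝ) * r ^ (m-1)))
      (g := fun (m : ℕ) (w : ℝ) => cc m * w ^ m)
      (g' := fun (m : ℕ) (w : ℝ) => cc m * ((m:ℝ) * w ^ (m-1)))
      ?_ isOpen_Ioo (convex_Ioo _ _).isPreconnected ?_ ?_
      (y₀ := 0) ?_ ?_ hz
    · exact summable_deriv_cc (by rwa [abs_of_pos hr0])
    · intro n y _; exact (hasDerivAt_pow n y).const_mul (cc n)
    · intro n y hy
      rw [Real.norm_eq_abs, abs_mul, abs_of_pos (cc_pos n), abs_mul, Nat.abs_cast, abs_pow]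
      have hyr : |y| ≤ r := by
        rw [abs_le]; exact ⟨hy.1.le, hy.2.le⟩
      exact mul_le_mul_of_nonneg_left (mul_le_mul_of_nonneg_left
        (pow_le_pow_left₀ (abs_nonneg y) hyr _) (Nat.cast_nonneg n)) (cc_pos n).le
    · exact ⟨by linarith, hr0⟩
    · exact summable_cc_pow (by rw [abs_zero]; norm_num)
  -- the auxiliary function
  set g : ℝ → ℝ := fun z => Real.sqrt (1 - z) * ∑' m : ℕ, cc m * z ^ m with hgdef
  have hgderiv : ∀ z ∈ Set.Ioo (-r) r, HasDerivAt g
      (Real.sqrt (1 - z) * (∑' m : ℕ, cc m * ((m:ℝ) * z ^ (m-1)))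
        + (-(1/(2 * Real.sqrt (1 - z)))) * ∑' m : ℕ, cc m * z ^ m) z := by
    intro z hz
    have hz1 : z < 1 := by linarith [hz.2]
    have hne : (1:ℝ) - z ≠ 0 := by linarith
    have hsq : HasDerivAt (fun w : ℝ => Real.sqrt (1 - w)) (-(1/(2 * Real.sqrt (1 - z)))) z := by
      have hinner : HasDerivAt (fun w : ℝ => 1 - w) (-1) z := by
        exact (hasDerivAt_id' z).const_sub (1:ℝ)
      have := (Real.hasDerivAt_sqrt hne).comp z hinner
      exact this.congr_deriv (by ring)
    have hmul : HasDerivAt (fun w : ℝ => Real.sqrt (1 - w) * ∑' m : ℕ, cc m * w ^ m)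
        ((-(1/(2 * Real.sqrt (1 - z)))) * (∑' m : ℕ, cc m * z ^ m)
          + Real.sqrt (1 - z) * (∑' m : ℕ, cc m * ((m:ℝ) * z ^ (m-1)))) z :=
      hsq.mul (key z hz)
    convert hmul using 1
    ring
  have hzero : ∀ z ∈ Set.Ico 0 t, HasDerivWithinAt g 0 (Set.Ici z) z := by
    intro z hz
    have hzmem : z ∈ Set.Ioo (-r) r := ⟨by linarith [hz.1], by linarith [hz.2]⟩
    have hz1 : z < 1 := by linarith [hz.2]
    have hpos : 0 < Real.sqrt (1 - z) := Real.sqrt_pos.2 (by linarith)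
    have hw : Real.sqrt (1 - z) * Real.sqrt (1 - z) = 1 - z :=
      Real.mul_self_sqrt (by linarith)
    have hid := deriv_identity (habs z hzmem)
    have heq : Real.sqrt (1 - z) * (∑' m : ℕ, cc m * ((m:ℝ) * z ^ (m-1)))
        + (-(1/(2 * Real.sqrt (1 - z)))) * ∑' m : ℕ, cc m * z ^ m = 0 := by
      set w := Real.sqrt (1 - z)
      set D := ∑' m : ℕ, cc m * ((m:ℝ) * z ^ (m-1))
      set S := ∑' m : ℕ, cc m * z ^ m
      have hw' : w ≠ 0 := ne_of_gt hpos
      field_simp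
      linear_combination 2*D*hw + 2*hid
    exact (heq ▸ hgderiv z hzmem).hasDerivWithinAt
  have hcont : ContinuousOn g (Set.Icc 0 t) := by
    intro z hz
    have hzmem : z ∈ Set.Ioo (-r) r := ⟨by linarith [hz.1], by linarith [hz.2]⟩
    exact (hgderiv z hzmem).continuousAt.continuousWithinAt
  have hconst := constant_of_has_deriv_right_zero hcont hzero t (Set.right_mem_Icc.2 h0)
  have hS0 : (∑' m : ℕ, cc m * (0:ℝ) ^ m) = 1 := by
    rw [tsum_eq_single 0 (fun m hm => by simp [zero_pow hm])]
    simp [cc_zero]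
  have hg0 : g 0 = 1 := by
    rw [hgdef]; simp only; rw [hS0]; simp
  have hgt : g t = 1 := by rw [hconst, hg0]
  have hpos : 0 < Real.sqrt (1 - t) := Real.sqrt_pos.2 (by linarith)
  rw [hgdef] at hgt
  simp only at hgt
  field_simp
  linarith [hgt]


lemma Gamma_half (k : ℕ) :
    Real.Gamma ((k:ℝ) + 1/2) = (ascPochhammer ℝ k).eval (1/2 : ℝ) * Real.sqrt π := by
  induction k with
  | zero =>
    simp only [Nat.cast_zero, zero_add, ascPochhammer_zero, Polynomial.eval_one, one_mul]
    exact Real.Gamma_one_half_eq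
  | succ n ih =>
    have h : ((n+1 : ℕ):ℝ) + 1/2 = ((n:ℝ) + 1/2) + 1 := by push_cast; ring
    rw [h, Real.Gamma_add_one (by positivity), ih, ascPochhammer_succ_right]
    simp [Polynomial.eval_mul]
    ring

lemma beta_lemma (k : ℕ) :
    IntervalIntegrable (fun u : ℝ => u ^ ((k:ℝ) - 1/2) * (1-u) ^ (-(1/2) : ℝ)) volume 0 1 ∧
    ∫ u in (0:ℝ)..1, u ^ ((k:ℝ) - 1/2) * (1-u) ^ (-(1/2) : ℝ)
      = π * ((ascPochhammer ℝ k).eval (1/2 : ℝ) / k.factorial) := by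
  set s : ℂ := (k:ℂ) + 1/2 with hs
  have hsre : 0 < s.re := by
    rw [hs]; simp [Complex.add_re]; positivity
  have htre : 0 < (1/2 : ℂ).re := by norm_num
  have hconv := Complex.betaIntegral_convergent hsre htre
  have heqon : EqOn (fun u : ℝ => ((u ^ ((k:ℝ) - 1/2) * (1-u) ^ (-(1/2) : ℝ) : ℝ) : ℂ))
      (fun u : ℝ => (u:ℂ) ^ (s - 1) * ((1:ℂ) - u) ^ ((1/2 : ℂ) - 1)) (uIcc (0:ℝ) 1) := by
    intro u hu
    rw [uIcc_of_le (by norm_num)] at hu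
    obtain ⟨hu0, hu1⟩ := hu
    have h1u : (0:ℝ) ≤ 1 - u := by linarith
    have e1 : (((k:ℝ) - 1/2 : ℝ) : ℂ) = s - 1 := by rw [hs]; push_cast; ring
    have e2 : ((-(1/2) : ℝ) : ℂ) = (1/2 : ℂ) - 1 := by push_cast; norm_num
    simp only [Complex.ofReal_mul]
    rw [Complex.ofReal_cpow hu0, Complex.ofReal_cpow h1u, e1, e2]
    norm_num [Complex.ofReal_sub]
  have h2 : IntervalIntegrable
      (fun u : ℝ => ((u ^ ((k:ℝ) - 1/2) * (1-u) ^ (-(1/2) : ℝ) : ℝ) : ℂ)) volume 0 1 := by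
    apply hconv.congr
    rw [uIoc_of_le (by norm_num : (0:ℝ) ≤ 1)]
    intro u hu
    exact (heqon ((Ioc_subset_Icc_self.trans (uIcc_of_le (by norm_num)).symm.subset) hu)).symm
  have hint : IntervalIntegrable
      (fun u : ℝ => u ^ ((k:ℝ) - 1/2) * (1-u) ^ (-(1/2) : ℝ)) volume 0 1 := by
    constructor
    · simpa [IntegrableOn] using h2.1.re
    · simpa [IntegrableOn] using h2.2.re
  refine ⟨hint, ?_⟩
  have hfac : ((k.factorial : ℝ) : ℂ) ≠ 0 := by
    simp [Nat.factorial_ne_zero]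
  have hval : Complex.betaIntegral s (1/2)
      = ((Real.Gamma ((k:ℝ)+1/2) * Real.sqrt π / k.factorial : ℝ) : ℂ) := by
    have hG := Complex.Gamma_mul_Gamma_eq_betaIntegral hsre htre
    have hs1 : s + 1/2 = ((k:ℕ) + 1 : ℂ) := by rw [hs]; push_cast; ring
    have hGs : Complex.Gamma s = ((Real.Gamma ((k:ℝ) + 1/2) : ℝ) : ℂ) := by
      rw [← Complex.Gamma_ofReal]; norm_num [hs]
    have hGt : Complex.Gamma (1/2) = ((Real.sqrt π : ℝ) : ℂ) := by
      rw [show ((1/2 : ℂ)) = ((1/2 : ℝ) : ℂ) by norm_num, Complex.Gamma_ofReal,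
        Real.Gamma_one_half_eq]
    have hGst : Complex.Gamma (s + 1/2) = ((k.factorial : ℝ) : ℂ) := by
      rw [hs1, show ((k:ℕ) + 1 : ℂ) = (((k:ℕ) : ℝ) + 1 : ℝ) by push_cast; ring,
        Complex.Gamma_ofReal, Real.Gamma_nat_eq_factorial]
    rw [hGs, hGt, hGst] at hG
    rw [Complex.ofReal_div, eq_div_iff hfac]
    rw [Complex.ofReal_mul]
    linear_combination -hG
  have hcoe : (∫ u in (0:ℝ)..1, (u:ℂ) ^ (s - 1) * ((1:ℂ) - u) ^ ((1/2 : ℂ) - 1))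
      = ((∫ u in (0:ℝ)..1, u ^ ((k:ℝ) - 1/2) * (1-u) ^ (-(1/2) : ℝ) : ℝ) : ℂ) := by
    rw [← intervalIntegral.integral_ofReal]
    exact (intervalIntegral.integral_congr heqon).symm
  have hbeta : Complex.betaIntegral s (1/2)
      = ∫ u in (0:ℝ)..1, (u:ℂ) ^ (s - 1) * ((1:ℂ) - u) ^ ((1/2 : ℂ) - 1) := rfl
  have hfin := (hval.symm.trans (hbeta.trans hcoe))
  have hre : (∫ u in (0:ℝ)..1, u ^ ((k:ℝ) - 1/2) * (1-u) ^ (-(1/2) : ℝ))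
      = Real.Gamma ((k:ℝ)+1/2) * Real.sqrt π / k.factorial := by
    exact_mod_cast hfin.symm
  rw [hre, Gamma_half, mul_assoc, Real.mul_self_sqrt pi_pos.le]
  ring

theorem stmt_7 (x y : ℝ) (hx : 0 ≤ x) (hx1 : x < 1) (hy : 0 ≤ y) (hy1 : y < 1) :
    Summable (fun p : ℕ × ℕ =>
      (ascPochhammer ℝ (p.1 + p.2)).eval (1/2 : ℝ) * (ascPochhammer ℝ p.1).eval (1/2 : ℝ)
        * (ascPochhammer ℝ p.2).eval (1/2 : ℝ)
        / ((ascPochhammer ℝ (p.1 + p.2)).eval (1 : ℝ)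
            * (Nat.factorial p.1 : ℝ) * (Nat.factorial p.2 : ℝ))
        * x ^ p.1 * y ^ p.2) ∧
    (∑' p : ℕ × ℕ,
      (ascPochhammer ℝ (p.1 + p.2)).eval (1/2 : ℝ) * (ascPochhammer ℝ p.1).eval (1/2 : ℝ)
        * (ascPochhammer ℝ p.2).eval (1/2 : ℝ)
        / ((ascPochhammer ℝ (p.1 + p.2)).eval (1 : ℝ)
            * (Nat.factorial p.1 : ℝ) * (Nat.factorial p.2 : ℝ))
        * x ^ p.1 * y ^ p.2)
      = (1 / π) * ∫ u in (0:ℝ)..1,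
          1 / Real.sqrt (u * (1 - u) * (1 - x * u) * (1 - y * u)) := by
  have term_eq : ∀ p : ℕ × ℕ,
      (ascPochhammer ℝ (p.1 + p.2)).eval (1/2 : ℝ) * (ascPochhammer ℝ p.1).eval (1/2 : ℝ)
        * (ascPochhammer ℝ p.2).eval (1/2 : ℝ)
        / ((ascPochhammer ℝ (p.1 + p.2)).eval (1 : ℝ)
            * (Nat.factorial p.1 : ℝ) * (Nat.factorial p.2 : ℝ))
        * x ^ p.1 * y ^ p.2
      = cc (p.1 + p.2) * cc p.1 * cc p.2 * x ^ p.1 * y ^ p.2 := by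
    intro p
    rw [ascPochhammer_eval_one]
    simp only [cc]
    have h1 : ((p.1 + p.2).factorial : ℝ) ≠ 0 := by exact_mod_cast (p.1+p.2).factorial_ne_zero
    have h2 : ((p.1).factorial : ℝ) ≠ 0 := by exact_mod_cast (p.1).factorial_ne_zero
    have h3 : ((p.2).factorial : ℝ) ≠ 0 := by exact_mod_cast (p.2).factorial_ne_zero
    field_simp
  have hgeo : Summable (fun p : ℕ × ℕ => x ^ p.1 * y ^ p.2) :=
    (summable_geometric_of_lt_one hx hx1).mul_of_nonneg
      (summable_geometric_of_lt_one hy hy1)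
      (fun m => pow_nonneg hx m) (fun n => pow_nonneg hy n)
  have hT : Summable (fun p : ℕ × ℕ => cc (p.1 + p.2) * cc p.1 * cc p.2 * x ^ p.1 * y ^ p.2) := by
    refine Summable.of_nonneg_of_le (fun p => ?_) (fun p => ?_) hgeo
    · have := cc_pos (p.1+p.2); have := cc_pos p.1; have := cc_pos p.2
      positivity
    · have hle : cc (p.1 + p.2) * cc p.1 * cc p.2 ≤ 1 :=
        mul_le_one₀ (mul_le_one₀ (cc_le_one _) (cc_pos _).le (cc_le_one _))
          (cc_pos _).le (cc_le_one _)
      calc cc (p.1 + p.2) * cc p.1 * cc p.2 * x ^ p.1 * y ^ p.2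
          = (cc (p.1 + p.2) * cc p.1 * cc p.2) * (x ^ p.1 * y ^ p.2) := by ring
        _ ≤ 1 * (x ^ p.1 * y ^ p.2) := mul_le_mul_of_nonneg_right hle (by positivity)
        _ = x ^ p.1 * y ^ p.2 := one_mul _
  have hsum_main : Summable (fun p : ℕ × ℕ =>
      (ascPochhammer ℝ (p.1 + p.2)).eval (1/2 : ℝ) * (ascPochhammer ℝ p.1).eval (1/2 : ℝ)
        * (ascPochhammer ℝ p.2).eval (1/2 : ℝ)
        / ((ascPochhammer ℝ (p.1 + p.2)).eval (1 : ℝ)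
            * (Nat.factorial p.1 : ℝ) * (Nat.factorial p.2 : ℝ))
        * x ^ p.1 * y ^ p.2) := hT.congr (fun p => (term_eq p).symm)
  refine ⟨hsum_main, ?_⟩
  set F : ℕ × ℕ → ℝ → ℝ := fun p u =>
    cc p.1 * x ^ p.1 * (cc p.2 * y ^ p.2)
      * (u ^ (((p.1 + p.2 : ℕ):ℝ) - 1/2) * (1-u) ^ (-(1/2) : ℝ)) with hF
  have hFint : ∀ p : ℕ × ℕ, IntegrableOn (F p) (Set.Ioo (0:ℝ) 1) volume := by
    intro p
    apply MeasureTheory.Integrable.const_mul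
    have h := (intervalIntegrable_iff_integrableOn_Ioc_of_le zero_le_one).1 (beta_lemma (p.1+p.2)).1
    exact h.mono_set Set.Ioo_subset_Ioc_self
  have hFval : ∀ p : ℕ × ℕ, (∫ u in Set.Ioo (0:ℝ) 1, F p u)
      = π * (cc (p.1 + p.2) * cc p.1 * cc p.2 * x ^ p.1 * y ^ p.2) := by
    intro p
    rw [hF]
    simp only
    rw [MeasureTheory.integral_const_mul, ← MeasureTheory.integral_Ioc_eq_integral_Ioo,
      ← intervalIntegral.integral_of_le zero_le_one, (beta_lemma (p.1+p.2)).2]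
    simp only [cc]
    ring
  have hFnonneg : ∀ p : ℕ × ℕ, ∀ u ∈ Set.Ioo (0:ℝ) 1, 0 ≤ F p u := by
    intro p u hu
    have hu0 : (0:ℝ) ≤ u := hu.1.le
    have hu1 : (0:ℝ) ≤ 1 - u := by linarith [hu.2]
    rw [hF]
    simp only
    have := cc_pos p.1; have := cc_pos p.2
    positivity
  have hFnormint : Summable (fun p : ℕ × ℕ => ∫ u in Set.Ioo (0:ℝ) 1, ‖F p u‖) := by
    have heq : ∀ p : ℕ × ℕ, (∫ u in Set.Ioo (0:ℝ) 1, ‖F p u‖)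
        = π * (cc (p.1 + p.2) * cc p.1 * cc p.2 * x ^ p.1 * y ^ p.2) := by
      intro p
      rw [← hFval p]
      apply MeasureTheory.setIntegral_congr_fun measurableSet_Ioo
      intro u hu
      exact norm_of_nonneg (hFnonneg p u hu)
    exact ((hT.mul_left π).congr (fun p => (heq p).symm))
  have hswap := MeasureTheory.integral_tsum_of_summable_integral_norm
    (μ := volume.restrict (Set.Ioo (0:ℝ) 1)) (F := F) hFint hFnormint
  have hpoint : ∀ u ∈ Set.Ioo (0:ℝ) 1, (∑' p : ℕ × ℕ, F p u)
      = 1 / Real.sqrt (u * (1 - u) * (1 - x * u) * (1 - y * u)) := by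
    intro u hu
    obtain ⟨hu0, hu1⟩ := hu
    have hxu0 : 0 ≤ x * u := by positivity
    have hxu1 : x * u < 1 := lt_of_le_of_lt (by nlinarith) hx1
    have hyu0 : 0 ≤ y * u := by positivity
    have hyu1 : y * u < 1 := lt_of_le_of_lt (by nlinarith) hy1
    have hsx : Summable (fun m : ℕ => ‖cc m * (x*u) ^ m‖) := by
      apply (summable_cc_pow (by rw [abs_of_nonneg hxu0]; exact hxu1)).congr
      intro m
      exact (norm_of_nonneg (mul_nonneg (cc_pos m).le (pow_nonneg hxu0 m))).symm
    have hsy : Summable (fun n : ℕ => ‖cc n * (y*u) ^ n‖) := by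
      apply (summable_cc_pow (by rw [abs_of_nonneg hyu0]; exact hyu1)).congr
      intro n
      exact (norm_of_nonneg (mul_nonneg (cc_pos n).le (pow_nonneg hyu0 n))).symm
    have hprod := tsum_mul_tsum_of_summable_norm hsx hsy
    rw [tsum_cc_sqrt hxu0 hxu1, tsum_cc_sqrt hyu0 hyu1] at hprod
    have hFform : ∀ p : ℕ × ℕ, F p u
        = (cc p.1 * (x*u) ^ p.1) * (cc p.2 * (y*u) ^ p.2)
          * (u ^ (-(1/2) : ℝ) * (1-u) ^ (-(1/2) : ℝ)) := by
      intro p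
      rw [hF]
      simp only
      have hrw : u ^ (((p.1 + p.2 : ℕ):ℝ) - 1/2)
          = u ^ p.1 * u ^ p.2 * u ^ (-(1/2) : ℝ) := by
        rw [show (((p.1 + p.2 : ℕ):ℝ) - 1/2) = ((p.1:ℕ):ℝ) + (((p.2:ℕ):ℝ) + (-(1/2))) by
          push_cast; ring]
        rw [Real.rpow_add hu0, Real.rpow_add hu0, Real.rpow_natCast, Real.rpow_natCast]
        ring
      rw [hrw, mul_pow, mul_pow]
      ring
    calc (∑' p : ℕ × ℕ, F p u)
        = (∑' p : ℕ × ℕ, (cc p.1 * (x*u) ^ p.1) * (cc p.2 * (y*u) ^ p.2))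
          * (u ^ (-(1/2) : ℝ) * (1-u) ^ (-(1/2) : ℝ)) := by
          rw [← tsum_mul_right]; exact tsum_congr hFform
      _ = (1 / Real.sqrt (1 - x*u)) * (1 / Real.sqrt (1 - y*u))
          * (u ^ (-(1/2) : ℝ) * (1-u) ^ (-(1/2) : ℝ)) := by rw [← hprod]
      _ = 1 / Real.sqrt (u * (1 - u) * (1 - x * u) * (1 - y * u)) := by
          have h1u : (0:ℝ) ≤ 1 - u := by linarith
          have hx' : (0:ℝ) < 1 - x*u := by linarith
          have hy' : (0:ℝ) < 1 - y*u := by linarith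
          rw [Real.rpow_neg hu0.le, Real.rpow_neg h1u, ← Real.sqrt_eq_rpow,
            ← Real.sqrt_eq_rpow]
          rw [Real.sqrt_mul (by positivity : (0:ℝ) ≤ u * (1-u) * (1-x*u)),
            Real.sqrt_mul (by positivity : (0:ℝ) ≤ u * (1-u)),
            Real.sqrt_mul hu0.le]
          have s1 : Real.sqrt u ≠ 0 := ne_of_gt (Real.sqrt_pos.2 hu0)
          have s2 : Real.sqrt (1-u) ≠ 0 := ne_of_gt (Real.sqrt_pos.2 (by linarith))
          have s3 : Real.sqrt (1-x*u) ≠ 0 := ne_of_gt (Real.sqrt_pos.2 hx')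
          have s4 : Real.sqrt (1-y*u) ≠ 0 := ne_of_gt (Real.sqrt_pos.2 hy')
          field_simp
  rw [tsum_congr term_eq]
  have hint_eq : (∫ u in (0:ℝ)..1, 1 / Real.sqrt (u * (1 - u) * (1 - x * u) * (1 - y * u)))
      = ∫ u in Set.Ioo (0:ℝ) 1, (∑' p : ℕ × ℕ, F p u) := by
    rw [intervalIntegral.integral_of_le zero_le_one,
      MeasureTheory.integral_Ioc_eq_integral_Ioo]
    apply MeasureTheory.setIntegral_congr_fun measurableSet_Ioo
    intro u hu
    exact (hpoint u hu).symm
  rw [hint_eq, ← hswap]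
  have hfinal : (∑' p : ℕ × ℕ, ∫ u in Set.Ioo (0:ℝ) 1, F p u)
      = π * ∑' p : ℕ × ℕ, cc (p.1 + p.2) * cc p.1 * cc p.2 * x ^ p.1 * y ^ p.2 := by
    rw [tsum_congr hFval, tsum_mul_left]
  rw [hfinal]
  have hπ : (π:ℝ) ≠ 0 := Real.pi_ne_zero
  field_simp
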